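/- Let A be an n×n complex matrix, u, v ∈ ℂⁿ, let m_A be the minimal polynomial of A, let p_{uv} be the polynomial satisfying p_{uv}(λ) = v* m_A(λ)(λIₙ − A)⁻¹u outside the spectrum of A, suppose ζ is a root of p_{uv} of multiplicity exactly k ≥ 1 with m_A(ζ) ≠ 0, and write a_m = v*(ζIₙ − A)^{−m}u. Then for every nonzero τ ∈ ℂ and every λ sufficiently close to ζ (with |λ − ζ| < 1/‖(ζIₙ − A)⁻¹‖) that is an eigenvalue of A + τ u v*, one has 1/τ = ∑_{j=k}^∞ (ζ − λ)^{j} a_{j+1}, where the series converges and a_{k+1} ≠ 0. -/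

import Mathlib

open Matrix Polynomial

set_option maxHeartbeats 1600000 in
set_option synthInstance.maxHeartbeats 400000 in
theorem stmt15 {n : ℕ} (A : Matrix (Fin n) (Fin n) ℂ) (u v : Fin n → ℂ)
    (p : Polynomial ℂ)
    (hp : ∀ lam ∉ spectrum ℂ A,
      p.eval lam = (minpoly ℂ A).eval lam *
        (star v ⬝ᵥ (lam • (1 : Matrix (Fin n) (Fin n) ℂ) - A)⁻¹.mulVec u))
    (ζ : ℂ) (k : ℕ) (hk : 1 ≤ k)
    (hmult : p.rootMultiplicity ζ = k)
    (hm : (minpoly ℂ A).eval ζ ≠ 0)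
    (a : ℕ → ℂ)
    (ha : ∀ m : ℕ,
      a m = star v ⬝ᵥ (((ζ • (1 : Matrix (Fin n) (Fin n) ℂ) - A)⁻¹) ^ m).mulVec u) :
    a (k + 1) ≠ 0 ∧
    ∀ τ : ℂ, τ ≠ 0 → ∀ lam : ℂ,
      ‖lam - ζ‖ <
        1 / ‖Matrix.toEuclideanCLM (𝕜 := ℂ) ((ζ • (1 : Matrix (Fin n) (Fin n) ℂ) - A)⁻¹)‖ →
      lam ∈ spectrum ℂ (A + τ • vecMulVec u (star v)) →
      HasSum (fun j : ℕ => (ζ - lam) ^ (k + j) * a (k + j + 1)) (1 / τ) := by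
  classical
  rcases Nat.eq_zero_or_pos n with hn | hn
  · exfalso
    subst hn
    haveI : Subsingleton (Matrix (Fin 0) (Fin 0) ℂ) :=
      ⟨fun x y => by ext i j; exact i.elim0⟩
    have hp0 : p = 0 := by
      apply Polynomial.funext
      intro lam
      have hnot : lam ∉ spectrum ℂ A := by
        rw [spectrum.notMem_iff]
        exact isUnit_of_subsingleton _
      rw [hp lam hnot]
      simp [dotProduct]
    rw [hp0, rootMultiplicity_zero] at hmult
    omega
  set M : Matrix (Fin n) (Fin n) ℂ := ζ • (1 : Matrix (Fin n) (Fin n) ℂ) - A with hM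
  obtain ⟨q0, hq0⟩ : (X - C ζ) ∣ (minpoly ℂ A - C ((minpoly ℂ A).eval ζ)) :=
    Polynomial.X_sub_C_dvd_sub_C_eval
  have haev : M * (((minpoly ℂ A).eval ζ)⁻¹ • (Polynomial.aeval A) q0) = 1 := by
    have h1 := congrArg (Polynomial.aeval A) hq0
    simp only [map_sub, _root_.map_mul, Polynomial.aeval_X, Polynomial.aeval_C, minpoly.aeval,
      zero_sub, Algebra.algebraMap_eq_smul_one] at h1
    have h2 : M * (Polynomial.aeval A) q0 = ((minpoly ℂ A).eval ζ) • 1 := by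
      have hM' : M = -(A - ζ • 1) := by rw [hM, neg_sub]
      rw [hM', neg_mul, ← h1, neg_neg]
    rw [Matrix.mul_smul, h2, smul_smul, inv_mul_cancel₀ hm, one_smul]
  have hdetM : IsUnit M.det := by
    have := congrArg det haev
    rw [det_mul, det_one] at this
    exact IsUnit.of_mul_eq_one _ this
  have hMM : M * M⁻¹ = 1 := Matrix.mul_nonsing_inv _ hdetM
  haveI : Nonempty (Fin n) := ⟨⟨0, hn⟩⟩
  have hone : (1 : Matrix (Fin n) (Fin n) ℂ) ≠ 0 := by
    intro h0
    have := congrFun (congrFun h0 ⟨0, hn⟩) ⟨0, hn⟩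
    simp [Matrix.one_apply] at this
  have hMinv0 : M⁻¹ ≠ 0 := fun h0 => hone (by rw [← hMM, h0, Matrix.mul_zero])
  set T := Matrix.toEuclideanCLM (𝕜 := ℂ) M⁻¹ with hTdef
  have hTne : T ≠ 0 := by
    intro h0
    apply hMinv0
    rw [hTdef] at h0
    have := congrArg (Matrix.toEuclideanCLM (𝕜 := ℂ)).symm h0
    simpa using this
  have hT : 0 < ‖T‖ := norm_pos_iff.mpr hTne
  -- the linear functional X ↦ v* (φ⁻¹(X) M⁻¹) u
  set Lf : (EuclideanSpace ℂ (Fin n) →L[ℂ] EuclideanSpace ℂ (Fin n)) →ₗ[ℂ] ℂ :=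
    { toFun := fun X =>
        star v ⬝ᵥ (((Matrix.toEuclideanCLM (𝕜 := ℂ)).symm X * M⁻¹).mulVec u)
      map_add' := fun X Y => by
        simp [_root_.map_add, Matrix.add_mul, Matrix.add_mulVec, dotProduct_add]
      map_smul' := fun c X => by
        simp [_root_.map_smul, Matrix.smul_mul, Matrix.smul_mulVec, dotProduct_smul] } with hLf
  set Lc := LinearMap.toContinuousLinearMap Lf with hLcdef
  have hLc : ∀ X, Lc X =
      star v ⬝ᵥ (((Matrix.toEuclideanCLM (𝕜 := ℂ)).symm X * M⁻¹).mulVec u) := fun X => rfl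
  have haL : ∀ m : ℕ, a (m + 1) = Lc (T ^ m) := by
    intro m
    rw [hLc, hTdef, ← _root_.map_pow, StarAlgEquiv.symm_apply_apply, ha, pow_succ]
  -- key geometric series lemma
  have key : ∀ lam : ℂ, ‖lam - ζ‖ < 1 / ‖T‖ →
      IsUnit (lam • (1 : Matrix (Fin n) (Fin n) ℂ) - A) ∧
      HasSum (fun m : ℕ => (ζ - lam) ^ m * a (m + 1))
        (star v ⬝ᵥ ((lam • (1 : Matrix (Fin n) (Fin n) ℂ) - A)⁻¹).mulVec u) := by
    intro lam hlam
    set w : ℂ := ζ - lam with hw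
    have hwT : ‖w • T‖ < 1 := by
      have hns : ‖w • T‖ = ‖w‖ * ‖T‖ := norm_smul w T
      rw [hns]
      have h1 : ‖w‖ < 1 / ‖T‖ := by rw [hw, norm_sub_rev]; exact hlam
      calc ‖w‖ * ‖T‖ < (1 / ‖T‖) * ‖T‖ := mul_lt_mul_of_pos_right h1 hT
        _ = 1 := by field_simp
    have hgeo : HasSum (fun m : ℕ => (w • T) ^ m) (∑' m : ℕ, (w • T) ^ m) :=
      (summable_geometric_of_norm_lt_one hwT).hasSum
    set S := ∑' m : ℕ, (w • T) ^ m with hS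
    have hmulS : (1 - w • T) * S = 1 := mul_neg_geom_series _ hwT
    have hsymm1 : (Matrix.toEuclideanCLM (𝕜 := ℂ)).symm (1 - w • T) = 1 - w • M⁻¹ := by
      rw [_root_.map_sub, _root_.map_one, _root_.map_smul, hTdef, StarAlgEquiv.symm_apply_apply]
    have hfac : lam • (1 : Matrix (Fin n) (Fin n) ℂ) - A = M * (1 - w • M⁻¹) := by
      rw [Matrix.mul_sub, Matrix.mul_smul, hMM, Matrix.mul_one, hM, hw, sub_smul]
      abel
    have h1 : (1 - w • M⁻¹) * (Matrix.toEuclideanCLM (𝕜 := ℂ)).symm S = 1 := by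
      rw [← hsymm1, ← _root_.map_mul, hmulS, _root_.map_one]
    have hBright : (lam • (1 : Matrix (Fin n) (Fin n) ℂ) - A) *
        ((Matrix.toEuclideanCLM (𝕜 := ℂ)).symm S * M⁻¹) = 1 := by
      rw [hfac, mul_assoc, ← mul_assoc (1 - w • M⁻¹), h1, one_mul, hMM]
    have hdet : IsUnit (lam • (1 : Matrix (Fin n) (Fin n) ℂ) - A).det := by
      have := congrArg det hBright
      rw [det_mul, det_one] at this
      exact IsUnit.of_mul_eq_one _ this
    have hunit : IsUnit (lam • (1 : Matrix (Fin n) (Fin n) ℂ) - A) :=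
      (Matrix.isUnit_iff_isUnit_det _).mpr hdet
    have hinv : (lam • (1 : Matrix (Fin n) (Fin n) ℂ) - A)⁻¹
        = (Matrix.toEuclideanCLM (𝕜 := ℂ)).symm S * M⁻¹ := Matrix.inv_eq_right_inv hBright
    refine ⟨hunit, ?_⟩
    have h2 := Lc.hasSum hgeo
    have hterm : ∀ m : ℕ, Lc ((w • T) ^ m) = w ^ m * a (m + 1) := by
      intro m
      rw [_root_.smul_pow, _root_.map_smul, ← haL m, smul_eq_mul]
    simp only [hterm] at h2
    rw [hLc, ← hinv] at h2
    exact h2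
  -- power series of the resolvent function
  set c : ℕ → ℂ := fun m => (-1 : ℂ) ^ m * a (m + 1) with hc
  set P := FormalMultilinearSeries.ofScalars ℂ c with hPdef
  set ρ : ℝ := 1 / (2 * ‖T‖) with hρdef
  have hρ : 0 < ρ := by rw [hρdef]; positivity
  have hρlt : ρ < 1 / ‖T‖ := by
    rw [hρdef]
    exact one_div_lt_one_div_of_lt hT (by linarith)
  have hbound : ∀ m : ℕ, ‖P m‖ * ρ ^ m ≤ ‖Lc‖ * (1 / 2 : ℝ) ^ m := by
    intro m
    have h1 : ‖P m‖ = ‖a (m + 1)‖ := by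
      rw [hPdef, FormalMultilinearSeries.ofScalars_norm ℂ c m, hc]
      simp
    have h2 : ‖a (m + 1)‖ ≤ ‖Lc‖ * ‖T‖ ^ m := by
      rw [haL m]
      have h4 := Lc.le_opNorm (T ^ m)
      have h5 : ‖Lc‖ * ‖T ^ m‖ ≤ ‖Lc‖ * ‖T‖ ^ m := by
        gcongr
        exact norm_pow_le _ _
      exact h4.trans h5
    rw [h1]
    calc ‖a (m + 1)‖ * ρ ^ m ≤ (‖Lc‖ * ‖T‖ ^ m) * ρ ^ m :=
          mul_le_mul_of_nonneg_right h2 (by positivity)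
      _ = ‖Lc‖ * (‖T‖ * ρ) ^ m := by ring
      _ = ‖Lc‖ * (1 / 2 : ℝ) ^ m := by
          congr 2
          rw [hρdef]
          field_simp
  have hsummableP : Summable (fun m : ℕ => ‖P m‖ * ρ ^ m) := by
    apply Summable.of_nonneg_of_le (fun m => by positivity) hbound
    exact ((summable_geometric_of_lt_one (by norm_num) (by norm_num)).mul_left _)
  have hradius : ENNReal.ofReal ρ ≤ P.radius := by
    have hcoe : ((ρ.toNNReal : NNReal) : ℝ) = ρ := Real.coe_toNNReal _ hρ.le
    have := P.le_radius_of_summable_norm (r := ρ.toNNReal) (by rw [hcoe]; exact hsummableP)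
    exact this
  set ft : ℂ → ℂ :=
    fun z => star v ⬝ᵥ ((z • (1 : Matrix (Fin n) (Fin n) ℂ) - A)⁻¹).mulVec u with hft
  have hball : HasFPowerSeriesOnBall ft P ζ (ENNReal.ofReal ρ) := by
    refine ⟨hradius, ENNReal.ofReal_pos.mpr hρ, ?_⟩
    intro y hy
    have hy' : ‖y‖ < ρ := by
      rw [mem_emetric_ball_zero_iff] at hy
      simpa [ENNReal.lt_ofReal_iff_toReal_lt] using hy
    have hy2 : ‖ζ + y - ζ‖ < 1 / ‖T‖ := by
      simpa using hy'.trans hρlt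
    have hks := (key (ζ + y) hy2).2
    have hfun : (fun m : ℕ => P m fun _ => y)
        = fun m : ℕ => (ζ - (ζ + y)) ^ m * a (m + 1) := by
      funext m
      rw [hPdef, FormalMultilinearSeries.ofScalars_apply_eq, hc]
      have hzy : ζ - (ζ + y) = -y := by ring
      rw [hzy, neg_pow, smul_eq_mul]
      ring
    rw [hfun]
    exact hks
  have hP : HasFPowerSeriesAt ft P ζ := hball.hasFPowerSeriesAt
  -- polynomial factorization
  have hp0 : p ≠ 0 := by
    intro h0
    rw [h0, rootMultiplicity_zero] at hmult
    omega
  have hfact : (X - C ζ) ^ k * (p /ₘ (X - C ζ) ^ k) = p := by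
    conv_rhs => rw [← Polynomial.pow_mul_divByMonic_rootMultiplicity_eq p ζ]
    rw [hmult]
  have hqζ : (p /ₘ (X - C ζ) ^ k).eval ζ ≠ 0 := by
    have := Polynomial.eval_divByMonic_pow_rootMultiplicity_ne_zero ζ hp0
    rwa [hmult] at this
  set h : ℂ → ℂ :=
    fun z => (p /ₘ (X - C ζ) ^ k).eval z * ((minpoly ℂ A).eval z)⁻¹ with hh
  have hpolyAn : ∀ (r : ℂ[X]) (z : ℂ), AnalyticAt ℂ (fun x => r.eval x) z := by
    intro r z
    have := (analyticAt_id (𝕜 := ℂ) (z := z)).aeval_polynomial r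
    simpa [Polynomial.coe_aeval_eq_eval] using this
  have hh_an : AnalyticAt ℂ h ζ := (hpolyAn _ ζ).mul ((hpolyAn (minpoly ℂ A) ζ).inv hm)
  have hh_ne : h ζ ≠ 0 := mul_ne_zero hqζ (inv_ne_zero hm)
  have hh_eq : ∀ᶠ z in nhds ζ, ft z = (z - ζ) ^ k • h z := by
    have hev1 : ∀ᶠ z in nhds ζ, ‖z - ζ‖ < 1 / ‖T‖ := by
      have hball' : Metric.ball ζ (1 / ‖T‖) ∈ nhds ζ := Metric.ball_mem_nhds ζ (by positivity)
      filter_upwards [hball'] with z hz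
      simpa [Metric.mem_ball, dist_eq_norm] using hz
    have hev2 : ∀ᶠ z in nhds ζ, (minpoly ℂ A).eval z ≠ 0 :=
      (hpolyAn (minpoly ℂ A) ζ).continuousAt.eventually_ne hm
    filter_upwards [hev1, hev2] with z h1 h2
    have hzU := (key z h1).1
    have hznot : z ∉ spectrum ℂ A :=
      spectrum.notMem_iff.mpr (by simpa [Algebra.algebraMap_eq_smul_one] using hzU)
    have hez : eval z p = (z - ζ) ^ k * eval z (p /ₘ (X - C ζ) ^ k) := by
      conv_lhs => rw [← hfact]
      simp [eval_mul, eval_pow]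
    simp only [hft, hh, smul_eq_mul]
    have hMF : eval z (minpoly ℂ A) *
        (star v ⬝ᵥ (z • (1 : Matrix (Fin n) (Fin n) ℂ) - A)⁻¹.mulVec u)
        = (z - ζ) ^ k * eval z (p /ₘ (X - C ζ) ^ k) := by
      rw [← hp z hznot, hez]
    have h3 := congrArg (fun t => (eval z (minpoly ℂ A))⁻¹ * t) hMF
    rw [← mul_assoc, inv_mul_cancel₀ h2, one_mul] at h3
    rw [h3]
    ring
  have hA_an : AnalyticAt ℂ ft ζ := ⟨P, hP⟩
  have hexist : ¬ ∀ᶠ z in nhds ζ, ft z = 0 :=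
    hA_an.exists_eventuallyEq_pow_smul_nonzero_iff.mp ⟨k, h, hh_an, hh_ne, hh_eq⟩
  have hPne : P ≠ 0 := fun h0 => hexist (hP.locally_zero_iff.mpr h0)
  have horder : P.order = k :=
    AnalyticAt.unique_eventuallyEq_pow_smul_nonzero
      ⟨_, ⟨_, hP.has_fpower_series_iterate_dslope_fslope P.order⟩,
        hP.iterate_dslope_fslope_ne_zero hPne, Filter.Eventually.of_forall hP.eq_pow_order_mul_iterate_dslope⟩
      ⟨h, hh_an, hh_ne, hh_eq⟩
  have hcoeff0 : ∀ m, m < k → a (m + 1) = 0 := by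
    intro m hmk
    have h0 : P m = 0 := P.apply_eq_zero_of_lt_order (by rw [horder]; exact hmk)
    rw [hPdef] at h0
    have h1 : c m = 0 := (FormalMultilinearSeries.ofScalars_eq_zero ℂ m).mp h0
    rw [hc] at h1
    simp only at h1
    rcases mul_eq_zero.mp h1 with h2 | h2
    · exact absurd h2 (pow_ne_zero _ (by norm_num))
    · exact h2
  have hak : a (k + 1) ≠ 0 := by
    have h0 := P.apply_order_ne_zero hPne
    rw [horder] at h0
    intro hz
    apply h0
    rw [hPdef]
    apply FormalMultilinearSeries.ofScalars_eq_zero_of_scalar_zero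
    rw [hc]
    simp [hz]
  refine ⟨hak, ?_⟩
  intro τ hτ lam hballlam hspec
  obtain ⟨hunit, hsum⟩ := key lam hballlam
  set Lm : Matrix (Fin n) (Fin n) ℂ := lam • (1 : Matrix (Fin n) (Fin n) ℂ) - A with hLm
  have hdetL : IsUnit Lm.det := (Matrix.isUnit_iff_isUnit_det _).mp hunit
  have hLL : Lm * Lm⁻¹ = 1 := Matrix.mul_nonsing_inv _ hdetL
  have hXfac : lam • (1 : Matrix (Fin n) (Fin n) ℂ) - (A + τ • vecMulVec u (star v))
      = Lm * (1 - Lm⁻¹ * (τ • vecMulVec u (star v))) := by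
    rw [Matrix.mul_sub, Matrix.mul_one, ← Matrix.mul_assoc, hLL, Matrix.one_mul, hLm, sub_sub]
  have hnu : ¬ IsUnit (1 - Lm⁻¹ * (τ • vecMulVec u (star v))) := by
    intro hX
    have hUU : IsUnit (lam • (1 : Matrix (Fin n) (Fin n) ℂ)
        - (A + τ • vecMulVec u (star v))) := by
      rw [hXfac]; exact hunit.mul hX
    exact (spectrum.notMem_iff.mpr
      (by simpa [Algebra.algebraMap_eq_smul_one] using hUU)) hspec
  have hdet0 : (1 - Lm⁻¹ * (τ • vecMulVec u (star v))).det = 0 := by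
    by_contra hd
    exact hnu ((Matrix.isUnit_iff_isUnit_det _).mpr (isUnit_iff_ne_zero.mpr hd))
  have hform : (1 : Matrix (Fin n) (Fin n) ℂ) - Lm⁻¹ * (τ • vecMulVec u (star v))
      = 1 + replicateCol (Fin 1) (Lm⁻¹ *ᵥ ((-τ) • u)) * replicateRow (Fin 1) (star v) := by
    rw [vecMulVec_eq (Fin 1) u (star v)]
    rw [replicateCol_mulVec (ι := Fin 1)]
    rw [Matrix.replicateCol_smul (ι := Fin 1)]
    rw [Matrix.mul_smul]
    rw [Matrix.mul_smul]
    rw [Matrix.smul_mul]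
    rw [neg_smul]
    rw [← sub_eq_add_neg]
    rw [Matrix.mul_assoc]
    rfl
  have hdetval := det_one_add_replicateCol_mul_replicateRow (ι := Fin 1) (Lm⁻¹ *ᵥ ((-τ) • u)) (star v)
  erw [← hform, hdet0] at hdetval
  have hsimp : star v ⬝ᵥ (Lm⁻¹ *ᵥ ((-τ) • u)) = -τ * (star v ⬝ᵥ (Lm⁻¹ *ᵥ u)) := by
    rw [Matrix.mulVec_smul, dotProduct_smul, smul_eq_mul]
  rw [hsimp] at hdetval
  have hfl : star v ⬝ᵥ Lm⁻¹.mulVec u = 1 / τ := by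
    rw [eq_div_iff hτ]
    linear_combination hdetval
  rw [hfl] at hsum
  have hzero : ∀ i ∈ Finset.range k, (ζ - lam) ^ i * a (i + 1) = 0 := by
    intro i hi
    rw [hcoeff0 i (Finset.mem_range.mp hi), mul_zero]
  have hshift := (hasSum_nat_add_iff'
    (f := fun m : ℕ => (ζ - lam) ^ m * a (m + 1)) k).mpr hsum
  rw [Finset.sum_eq_zero hzero, sub_zero] at hshift
  have hfun2 : (fun j : ℕ => (ζ - lam) ^ (k + j) * a (k + j + 1))
      = fun j : ℕ => (ζ - lam) ^ (j + k) * a (j + k + 1) := by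
    funext j
    rw [add_comm k j]
  rw [hfun2]
  exact hshift
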